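/- Let X be a complete ultrametric space satisfying: (1) the set of balls of nonzero diameter in X is countable; (2) for every sequence of balls D_k with D_{k+1} ⊊ D_k for all k, the diameters of D_k tend to zero; (3) every ball of nonzero diameter is the union of finitely many of its maximal proper subballs. Let ν be a finite Borel measure on X. Then the closed linear span in L²(X,ν) of the constant functions together with the union of the subspaces V⁰_B, where B ranges over all balls of nonzero diameter, is the whole space L²(X,ν). -/

import Mathlib

open MeasureTheory

/-- A ball in a metric space: a closed ball of nonnegative radius. -/
def IsBall {X : Type*} [MetricSpace X] (B : Set X) : Prop :=
  ∃ (z : X) (r : ℝ), 0 ≤ r ∧ B = Metric.closedBall z r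

/-- `B'` is a maximal proper subball of `B`. -/
def IsMaxSubball {X : Type*} [MetricSpace X] (B' B : Set X) : Prop :=
  IsBall B' ∧ B' ⊂ B ∧ ∀ B'' : Set X, IsBall B'' → ¬ (B' ⊂ B'' ∧ B'' ⊂ B)

/-- `V⁰_B`: elements of `L²(X,ν)` that are a.e. equal to a finite linear
combination of indicator functions of maximal proper subballs of `B` and have
zero mean. -/
def V0 {X : Type*} [MetricSpace X] [MeasurableSpace X] (ν : Measure X) (B : Set X) :
    Set (MeasureTheory.Lp ℂ 2 ν) :=
  {f | (∃ (F : Finset (Set X)) (c : Set X → ℂ),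
          (∀ C ∈ F, IsMaxSubball C B) ∧
          ∀ᵐ x ∂ν, f x = ∑ C ∈ F, c C * Set.indicator C (fun _ => (1 : ℂ)) x) ∧
       ∫ x, f x ∂ν = 0}

/-- The a.e. constant elements of `L²(X,ν)`. -/
def ConstFuns {X : Type*} [MeasurableSpace X] (ν : Measure X) :
    Set (MeasureTheory.Lp ℂ 2 ν) :=
  {f | ∃ c : ℂ, ∀ᵐ x ∂ν, f x = c}


open Filter
open scoped Topology InnerProductSpace

set_option linter.unusedSectionVars false
set_option linter.unusedVariables false
namespace Stmt9
variable {X : Type*} [MetricSpace X]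

lemma isBall_nonempty {B : Set X} (h : IsBall B) : B.Nonempty := by
  obtain ⟨z, r, hr, rfl⟩ := h
  exact ⟨z, Metric.mem_closedBall_self hr⟩

lemma isBall_bounded {B : Set X} (h : IsBall B) : Bornology.IsBounded B := by
  obtain ⟨z, r, hr, rfl⟩ := h
  exact Metric.isBounded_closedBall

lemma isBall_measurableSet [MeasurableSpace X] [BorelSpace X] {B : Set X} (h : IsBall B) :
    MeasurableSet B := by
  obtain ⟨z, r, hr, rfl⟩ := h
  exact Metric.isClosed_closedBall.measurableSet

lemma isBall_nested (hultra : ∀ x y z : X, dist x y ≤ max (dist x z) (dist z y))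
    {B B' : Set X} (hB : IsBall B) (hB' : IsBall B') (hne : (B ∩ B').Nonempty) :
    B ⊆ B' ∨ B' ⊆ B := by
  obtain ⟨z, r, hr, rfl⟩ := hB
  obtain ⟨w, s, hs, rfl⟩ := hB'
  obtain ⟨p, hp1, hp2⟩ := hne
  simp only [Metric.mem_closedBall] at hp1 hp2
  rcases le_total r s with hrs | hrs
  · left
    intro y hy
    simp only [Metric.mem_closedBall] at *
    have h1 : dist y p ≤ max (dist y z) (dist z p) := hultra y p z
    have h2 : dist y w ≤ max (dist y p) (dist p w) := hultra y w p
    have hzp : dist z p ≤ r := by rw [dist_comm]; exact hp1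
    have hpw : dist p w ≤ s := hp2
    have : dist y p ≤ r := h1.trans (max_le hy hzp)
    exact h2.trans (max_le (this.trans hrs) hpw)
  · right
    intro y hy
    simp only [Metric.mem_closedBall] at *
    have h1 : dist y p ≤ max (dist y w) (dist w p) := hultra y p w
    have h2 : dist y z ≤ max (dist y p) (dist p z) := hultra y z p
    have hwp : dist w p ≤ s := by rw [dist_comm]; exact hp2
    have : dist y p ≤ s := h1.trans (max_le hy hwp)
    exact h2.trans (max_le (this.trans hrs) hp1)

lemma eq_singleton_of_diam_zero {B : Set X} (h : IsBall B) (hd : Metric.diam B = 0) :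
    ∃ x, B = {x} := by
  obtain ⟨z, r, hr, rfl⟩ := h
  refine ⟨z, Set.eq_singleton_iff_unique_mem.mpr ⟨Metric.mem_closedBall_self hr, fun y hy => ?_⟩⟩
  have := Metric.dist_le_diam_of_mem Metric.isBounded_closedBall hy (Metric.mem_closedBall_self hr)
  rw [hd] at this
  exact (dist_le_zero.mp this)

lemma diam_pos_of_ssubset {B D : Set X} (hB : B.Nonempty) (hD : IsBall D) (hsub : B ⊂ D) :
    0 < Metric.diam D := by
  obtain ⟨z, hz⟩ := hB
  obtain ⟨w, hwD, hwB⟩ := Set.exists_of_ssubset hsub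
  have hzD : z ∈ D := hsub.1 hz
  have hzw : z ≠ w := fun h => hwB (h ▸ hz)
  have := Metric.dist_le_diam_of_mem (isBall_bounded hD) hzD hwD
  have h0 : 0 < dist z w := dist_pos.mpr hzw
  linarith


lemma maxSubball_eq (hultra : ∀ x y z : X, dist x y ≤ max (dist x z) (dist z y))
    {B C C' : Set X} (hC : IsMaxSubball C B) (hC' : IsMaxSubball C' B)
    (hne : (C ∩ C').Nonempty) : C = C' := by
  rcases isBall_nested hultra hC.1 hC'.1 hne with h | h
  · rcases eq_or_ssubset_of_subset h with h' | h'
    · exact h'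
    · exact absurd ⟨h', hC'.2.1⟩ (hC.2.2 C' hC'.1)
  · rcases eq_or_ssubset_of_subset h with h' | h'
    · exact h'.symm
    · exact absurd ⟨h', hC.2.1⟩ (hC'.2.2 C hC.1)

lemma maxSubball_disjoint (hultra : ∀ x y z : X, dist x y ≤ max (dist x z) (dist z y))
    {B C C' : Set X} (hC : IsMaxSubball C B) (hC' : IsMaxSubball C' B)
    (hne : C ≠ C') : Disjoint C C' := by
  by_contra h
  exact hne (maxSubball_eq hultra hC hC' (Set.not_disjoint_iff_nonempty_inter.mp h))

lemma maxSubball_mem (hultra : ∀ x y z : X, dist x y ≤ max (dist x z) (dist z y))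
    {B : Set X} {F : Finset (Set X)} (hF : ∀ C ∈ F, IsMaxSubball C B)
    (hcov : B = ⋃ C ∈ F, C) {C : Set X} (hC : IsMaxSubball C B) : C ∈ F := by
  obtain ⟨z, hz⟩ := isBall_nonempty hC.1
  have hzB : z ∈ B := hC.2.1.1 hz
  rw [hcov] at hzB
  simp only [Set.mem_iUnion] at hzB
  obtain ⟨C', hC'F, hzC'⟩ := hzB
  have : C = C' := maxSubball_eq hultra hC (hF C' hC'F) ⟨z, hz, hzC'⟩
  exact this ▸ hC'F

lemma exists_maxSubball_superset (hultra : ∀ x y z : X, dist x y ≤ max (dist x z) (dist z y))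
    (h3 : ∀ B : Set X, IsBall B → 0 < Metric.diam B →
      ∃ F : Finset (Set X), (∀ C ∈ F, IsMaxSubball C B) ∧ B = ⋃ C ∈ F, C)
    {B D : Set X} (hB : IsBall B) (hD : IsBall D) (hsub : B ⊂ D) :
    ∃ C, IsMaxSubball C D ∧ B ⊆ C := by
  have hdiam : 0 < Metric.diam D := diam_pos_of_ssubset (isBall_nonempty hB) hD hsub
  obtain ⟨F, hF, hcov⟩ := h3 D hD hdiam
  obtain ⟨z, hz⟩ := isBall_nonempty hB
  have hzD : z ∈ D := hsub.1 hz
  rw [hcov] at hzD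
  simp only [Set.mem_iUnion] at hzD
  obtain ⟨C, hCF, hzC⟩ := hzD
  have hCmax := hF C hCF
  rcases isBall_nested hultra hB hCmax.1 ⟨z, hz, hzC⟩ with h | h
  · exact ⟨C, hCmax, h⟩
  · rcases eq_or_ssubset_of_subset h with h' | h'
    · exact ⟨C, hCmax, h'.symm.subset⟩
    · exact absurd ⟨h', hsub⟩ (hCmax.2.2 B hB)


lemma isBall_singleton (x : X) : IsBall ({x} : Set X) :=
  ⟨x, 0, le_refl 0, (Metric.closedBall_zero (x := x)).symm⟩


lemma singleton_maxSubball
    (hultra : ∀ x y z : X, dist x y ≤ max (dist x z) (dist z y))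
    (h2 : ∀ D : ℕ → Set X, (∀ k, IsBall (D k)) → (∀ k, D (k + 1) ⊂ D k) →
      Filter.Tendsto (fun k => Metric.diam (D k)) Filter.atTop (nhds 0))
    (h3 : ∀ B : Set X, IsBall B → 0 < Metric.diam B →
      ∃ F : Finset (Set X), (∀ C ∈ F, IsMaxSubball C B) ∧ B = ⋃ C ∈ F, C)
    {x : X} {r : ℝ} (hr : 0 < r) (hxr : Metric.closedBall x r = {x})
    {D : Set X} (hD : IsBall D) (hDd : 0 < Metric.diam D) (hxD : x ∈ D) :
    ∃ B : Set X, IsBall B ∧ 0 < Metric.diam B ∧ IsMaxSubball ({x} : Set X) B := by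
  classical
  have hB : IsBall ({x} : Set X) := isBall_singleton x
  have hBD : ({x} : Set X) ⊆ D := Set.singleton_subset_iff.mpr hxD
  obtain ⟨step, hstep⟩ : ∃ step : Set X → Set X, ∀ E,
      ((IsBall E ∧ ({x} : Set X) ⊂ E) → IsMaxSubball (step E) E ∧ ({x} : Set X) ⊆ step E) ∧
      (¬(IsBall E ∧ ({x} : Set X) ⊂ E) → step E = E) := by
    refine ⟨fun E => if h : IsBall E ∧ ({x} : Set X) ⊂ E then
      Classical.choose (exists_maxSubball_superset hultra h3 hB h.1 h.2) else E,
      fun E => ⟨fun h => ?_, fun h => dif_neg h⟩⟩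
    beta_reduce
    rw [dif_pos h]
    exact Classical.choose_spec (exists_maxSubball_superset hultra h3 hB h.1 h.2)
  set s : ℕ → Set X := fun n => step^[n] D with hs
  have hssucc : ∀ n, s (n + 1) = step (s n) := fun n => Function.iterate_succ_apply' step n D
  have hinv : ∀ n, IsBall (s n) ∧ ({x} : Set X) ⊆ s n := by
    intro n; induction n with
    | zero => exact ⟨hD, hBD⟩
    | succ n ih =>
      rw [hssucc]
      by_cases h : IsBall (s n) ∧ ({x} : Set X) ⊂ s n
      · obtain ⟨h1, h2'⟩ := (hstep (s n)).1 h
        exact ⟨h1.1, h2'⟩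
      · rw [(hstep (s n)).2 h]; exact ih
  by_cases hstop : ∃ n, s n = ({x} : Set X)
  · obtain ⟨n, hn⟩ := hstop
    have hn0 : s 0 ≠ ({x} : Set X) := by
      intro h0
      have : Metric.diam (s 0) = 0 := by rw [h0]; exact Metric.diam_singleton
      rw [show s 0 = D from rfl] at this
      exact absurd this (ne_of_gt hDd)
    -- take least n with s n = {x}
    have hex : ∃ n, s n = ({x} : Set X) := ⟨n, hn⟩
    set m := Nat.find hex with hm
    have hsm : s m = ({x} : Set X) := Nat.find_spec hex
    have hm0 : m ≠ 0 := fun h => hn0 (h ▸ hsm)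
    obtain ⟨k, hk⟩ := Nat.exists_eq_succ_of_ne_zero hm0
    have hkmin : s k ≠ ({x} : Set X) := Nat.find_min hex (by omega)
    have hcond : IsBall (s k) ∧ ({x} : Set X) ⊂ s k :=
      ⟨(hinv k).1, ssubset_of_subset_of_ne (hinv k).2 (Ne.symm hkmin)⟩
    have hmax : IsMaxSubball (s m) (s k) := by
      rw [hk, hssucc]
      exact ((hstep (s k)).1 hcond).1
    refine ⟨s k, (hinv k).1, ?_, hsm ▸ hmax⟩
    exact diam_pos_of_ssubset (Set.singleton_nonempty x) (hinv k).1 hcond.2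
  · push_neg at hstop
    exfalso
    have hstrict : ∀ n, s (n + 1) ⊂ s n := by
      intro n
      have h : IsBall (s n) ∧ ({x} : Set X) ⊂ s n :=
        ⟨(hinv n).1, ssubset_of_subset_of_ne (hinv n).2 (Ne.symm (hstop n))⟩
      rw [hssucc]
      exact ((hstep (s n)).1 h).1.2.1
    have hdiam := h2 s (fun n => (hinv n).1) hstrict
    obtain ⟨n, hn⟩ := (hdiam.eventually_lt_const hr).exists
    have hsub : s n ⊆ Metric.closedBall x r := by
      intro y hy
      exact Metric.mem_closedBall'.mpr
        ((Metric.dist_le_diam_of_mem (isBall_bounded (hinv n).1)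
          ((hinv n).2 rfl) hy).trans hn.le)
    rw [hxr] at hsub
    exact hstop n (le_antisymm hsub (hinv n).2)

lemma isOpen_measurable_gen
    (hultra : ∀ x y z : X, dist x y ≤ max (dist x z) (dist z y))
    (h1 : {B : Set X | IsBall B ∧ 0 < Metric.diam B}.Countable)
    (h2 : ∀ D : ℕ → Set X, (∀ k, IsBall (D k)) → (∀ k, D (k + 1) ⊂ D k) →
      Filter.Tendsto (fun k => Metric.diam (D k)) Filter.atTop (nhds 0))
    (h3 : ∀ B : Set X, IsBall B → 0 < Metric.diam B →
      ∃ F : Finset (Set X), (∀ C ∈ F, IsMaxSubball C B) ∧ B = ⋃ C ∈ F, C)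
    {U : Set X} (hU : IsOpen U) :
    MeasurableSet[MeasurableSpace.generateFrom ({A : Set X | IsBall A} ∪ {∅})] U := by
  classical
  rcases subsingleton_or_nontrivial X with hsub | hnt
  · rcases Set.eq_empty_or_nonempty U with rfl | ⟨x, hx⟩
    · exact @MeasurableSet.empty X (MeasurableSpace.generateFrom _)
    · have : U = {x} := Set.eq_singleton_iff_unique_mem.mpr ⟨hx, fun y _ => Subsingleton.elim y x⟩
      rw [this]
      exact MeasurableSpace.measurableSet_generateFrom (Or.inl (isBall_singleton x))
  · set G := {E : Set X | IsBall E ∧ 0 < Metric.diam E ∧ E ⊆ U} with hG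
    set T := {x : X | x ∈ U ∧ ∃ r : ℝ, 0 < r ∧ Metric.closedBall x r = {x}} with hT
    have hdecomp : U = (⋃ E ∈ G, E) ∪ (⋃ x ∈ T, {x}) := by
      apply Set.Subset.antisymm
      · intro x hx
        obtain ⟨ε, hε, hball⟩ := Metric.isOpen_iff.mp hU x hx
        have hcb : Metric.closedBall x (ε/2) ⊆ U :=
          (Metric.closedBall_subset_ball (by linarith)).trans hball
        have hcball : IsBall (Metric.closedBall x (ε/2)) := ⟨x, ε/2, by linarith, rfl⟩
        rcases (Metric.diam_nonneg (s := Metric.closedBall x (ε/2))).lt_or_eq with hd | hd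
        · exact Or.inl (Set.mem_biUnion ⟨hcball, hd, hcb⟩
            (Metric.mem_closedBall_self (by linarith)))
        · obtain ⟨y, hy⟩ := eq_singleton_of_diam_zero hcball hd.symm
          have hxy : x ∈ ({y} : Set X) := hy ▸ Metric.mem_closedBall_self (by linarith)
          have hyx : y = x := (Set.mem_singleton_iff.mp hxy).symm
          refine Or.inr (Set.mem_biUnion ?_ rfl)
          exact ⟨hx, ε/2, by linarith, by rw [hy, hyx]⟩
      · rintro x (hx | hx)
        · obtain ⟨E, hE, hxE⟩ := Set.mem_iUnion₂.mp hx
          exact hE.2.2 hxE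
        · obtain ⟨y, hy, hxy⟩ := Set.mem_iUnion₂.mp hx
          rw [Set.mem_singleton_iff.mp hxy]
          exact hy.1
    have hGsub : G ⊆ {B : Set X | IsBall B ∧ 0 < Metric.diam B} := fun E hE => ⟨hE.1, hE.2.1⟩
    have hGcount : G.Countable := Set.Countable.mono hGsub h1
    have hTcount : T.Countable := by
      set S₀ := ⋃ E ∈ {E : Set X | IsBall E ∧ 0 < Metric.diam E}, {C : Set X | IsMaxSubball C E}
        with hS₀
      have hS₀count : S₀.Countable := by
        refine Set.Countable.biUnion h1 (fun E hE => ?_)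
        obtain ⟨F, hF, hcov⟩ := h3 E hE.1 hE.2
        exact (F.finite_toSet.subset (fun C hC => maxSubball_mem hultra hF hcov hC)).countable
      have hmem : ∀ x ∈ T, ({x} : Set X) ∈ S₀ := by
        intro x hx
        obtain ⟨hxU, r, hr, hxr⟩ := hx
        obtain ⟨y, hyx⟩ := exists_ne x
        have hxD : x ∈ Metric.closedBall x (dist x y) :=
          Metric.mem_closedBall_self dist_nonneg
        have hyD : y ∈ Metric.closedBall x (dist x y) :=
          Metric.mem_closedBall.mpr (by rw [dist_comm])
        have hDball : IsBall (Metric.closedBall x (dist x y)) :=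
          ⟨x, dist x y, dist_nonneg, rfl⟩
        have hDd : 0 < Metric.diam (Metric.closedBall x (dist x y)) := by
          have hd := Metric.dist_le_diam_of_mem (isBall_bounded hDball) hyD hxD
          have : (0 : ℝ) < dist y x := dist_pos.mpr hyx
          linarith
        obtain ⟨B, hBball, hBd, hBmax⟩ :=
          singleton_maxSubball hultra h2 h3 hr hxr hDball hDd hxD
        exact Set.mem_biUnion ⟨hBball, hBd⟩ hBmax
      have hTsub : T ⊆ (fun x : X => ({x} : Set X)) ⁻¹' S₀ := hmem
      exact Set.Countable.mono hTsub (hS₀count.preimage (fun a b => by simp))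
    rw [hdecomp]
    refine MeasurableSet.union ?_ ?_
    · exact MeasurableSet.biUnion hGcount (fun E hE =>
        MeasurableSpace.measurableSet_generateFrom (Or.inl hE.1))
    · exact MeasurableSet.biUnion hTcount (fun x _ =>
        MeasurableSpace.measurableSet_generateFrom (Or.inl (isBall_singleton x)))


section Meas
variable [MeasurableSpace X] [BorelSpace X] {ν : Measure X} [IsFiniteMeasure ν] {f : X → ℂ}

lemma ratio_maxSubball (hultra : ∀ x y z : X, dist x y ≤ max (dist x z) (dist z y))
    (h3 : ∀ B : Set X, IsBall B → 0 < Metric.diam B →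
      ∃ F : Finset (Set X), (∀ C ∈ F, IsMaxSubball C B) ∧ B = ⋃ C ∈ F, C)
    (hf : Integrable f ν)
    (Hpair : ∀ B, IsBall B → 0 < Metric.diam B → ∀ C C', IsMaxSubball C B → IsMaxSubball C' B →
      (((ν C').toReal : ℂ)) * ∫ x in C, f x ∂ν = (((ν C).toReal : ℂ)) * ∫ x in C', f x ∂ν)
    {B C : Set X} (hB : IsBall B) (hd : 0 < Metric.diam B) (hC : IsMaxSubball C B) :
    (((ν B).toReal : ℂ)) * ∫ x in C, f x ∂ν = (((ν C).toReal : ℂ)) * ∫ x in B, f x ∂ν := by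
  obtain ⟨F, hF, hcov⟩ := h3 B hB hd
  have hdisj : (↑F : Set (Set X)).Pairwise (Function.onFun Disjoint (id : Set X → Set X)) :=
    fun C1 h1 C2 h2 hne => maxSubball_disjoint hultra (hF _ h1) (hF _ h2) hne
  have hmeas : ∀ C' ∈ F, MeasurableSet C' := fun C' h => isBall_measurableSet (hF C' h).1
  have hνB : ν B = ∑ C' ∈ F, ν C' := by
    rw [hcov]; exact measure_biUnion_finset hdisj hmeas
  have hIB : ∫ x in B, f x ∂ν = ∑ C' ∈ F, ∫ x in C', f x ∂ν := by
    rw [hcov]; exact integral_biUnion_finset F hmeas hdisj (fun i _ => hf.integrableOn)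
  have htr : (ν B).toReal = ∑ C' ∈ F, (ν C').toReal := by
    rw [hνB]; exact ENNReal.toReal_sum (fun a _ => measure_ne_top ν a)
  rw [htr, hIB]
  push_cast
  rw [Finset.sum_mul, Finset.mul_sum]
  exact Finset.sum_congr rfl fun C' hC' => Hpair B hB hd C C' hC (hF C' hC')

lemma nested_ratio (hultra : ∀ x y z : X, dist x y ≤ max (dist x z) (dist z y))
    (h2 : ∀ D : ℕ → Set X, (∀ k, IsBall (D k)) → (∀ k, D (k + 1) ⊂ D k) →
      Filter.Tendsto (fun k => Metric.diam (D k)) Filter.atTop (nhds 0))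
    (h3 : ∀ B : Set X, IsBall B → 0 < Metric.diam B →
      ∃ F : Finset (Set X), (∀ C ∈ F, IsMaxSubball C B) ∧ B = ⋃ C ∈ F, C)
    (hf : Integrable f ν)
    (Hratio : ∀ B, IsBall B → 0 < Metric.diam B → ∀ C, IsMaxSubball C B →
      (((ν B).toReal : ℂ)) * ∫ x in C, f x ∂ν = (((ν C).toReal : ℂ)) * ∫ x in B, f x ∂ν)
    {B D : Set X} (hB : IsBall B) (hD : IsBall D) (hBD : B ⊆ D) :
    (((ν D).toReal : ℂ)) * ∫ x in B, f x ∂ν = (((ν B).toReal : ℂ)) * ∫ x in D, f x ∂ν := by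
  classical
  obtain ⟨step, hstep⟩ : ∃ step : Set X → Set X, ∀ E,
      ((IsBall E ∧ B ⊂ E) → IsMaxSubball (step E) E ∧ B ⊆ step E) ∧
      (¬(IsBall E ∧ B ⊂ E) → step E = E) := by
    refine ⟨fun E => if h : IsBall E ∧ B ⊂ E then
      Classical.choose (exists_maxSubball_superset hultra h3 hB h.1 h.2) else E,
      fun E => ⟨fun h => ?_, fun h => dif_neg h⟩⟩
    beta_reduce
    rw [dif_pos h]
    exact Classical.choose_spec (exists_maxSubball_superset hultra h3 hB h.1 h.2)
  set s : ℕ → Set X := fun n => step^[n] D with hs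
  have hssucc : ∀ n, s (n + 1) = step (s n) := fun n => Function.iterate_succ_apply' step n D
  have hinv : ∀ n, IsBall (s n) ∧ B ⊆ s n := by
    intro n; induction n with
    | zero => exact ⟨hD, hBD⟩
    | succ n ih =>
      rw [hssucc]
      by_cases h : IsBall (s n) ∧ B ⊂ s n
      · obtain ⟨h1, h2'⟩ := (hstep (s n)).1 h
        exact ⟨h1.1, h2'⟩
      · rw [(hstep (s n)).2 h]; exact ih
  have hkey : ∀ n, (((ν D).toReal : ℂ)) * ∫ x in s n, f x ∂ν
      = (((ν (s n)).toReal : ℂ)) * ∫ x in D, f x ∂ν := by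
    intro n; induction n with
    | zero => simp [hs]
    | succ n ih =>
      by_cases h : IsBall (s n) ∧ B ⊂ s n
      · obtain ⟨hCmax, _⟩ := (hstep (s n)).1 h
        rw [hssucc] at *
        have hd : 0 < Metric.diam (s n) := diam_pos_of_ssubset (isBall_nonempty hB) h.1 h.2
        have hr := Hratio (s n) h.1 hd _ hCmax
        by_cases hz : ν (s n) = 0
        · have hCz : ν (step (s n)) = 0 :=
            le_antisymm (hz ▸ measure_mono hCmax.2.1.1) zero_le
          rw [setIntegral_measure_zero f hCz, hCz]
          simp
        · have ht : (((ν (s n)).toReal : ℂ)) ≠ 0 := by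
            simpa using ENNReal.toReal_ne_zero.mpr ⟨hz, measure_ne_top ν _⟩
          apply mul_left_cancel₀ ht
          calc ((ν (s n)).toReal : ℂ) * (((ν D).toReal : ℂ) * ∫ x in step (s n), f x ∂ν)
              = ((ν D).toReal : ℂ) * (((ν (s n)).toReal : ℂ) * ∫ x in step (s n), f x ∂ν) := by
                ring
            _ = ((ν D).toReal : ℂ) * (((ν (step (s n))).toReal : ℂ) * ∫ x in s n, f x ∂ν) := by
                rw [hr]
            _ = ((ν (step (s n))).toReal : ℂ) * (((ν D).toReal : ℂ) * ∫ x in s n, f x ∂ν) := by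
                ring
            _ = ((ν (step (s n))).toReal : ℂ) * (((ν (s n)).toReal : ℂ) * ∫ x in D, f x ∂ν) := by
                rw [ih]
            _ = ((ν (s n)).toReal : ℂ) * (((ν (step (s n))).toReal : ℂ) * ∫ x in D, f x ∂ν) := by
                ring
      · rw [hssucc, (hstep (s n)).2 h]; exact ih
  by_cases hstop : ∃ n, s n = B
  · obtain ⟨n, hn⟩ := hstop
    rw [← hn]; exact hkey n
  · push_neg at hstop
    have hstrict : ∀ n, s (n + 1) ⊂ s n := by
      intro n
      have h : IsBall (s n) ∧ B ⊂ s n :=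
        ⟨(hinv n).1, ssubset_of_subset_of_ne (hinv n).2 (Ne.symm (hstop n))⟩
      rw [hssucc]
      exact ((hstep (s n)).1 h).1.2.1
    have hdiam := h2 s (fun n => (hinv n).1) hstrict
    have hBd : Metric.diam B = 0 := by
      have hle : ∀ n, Metric.diam B ≤ Metric.diam (s n) :=
        fun n => Metric.diam_mono (hinv n).2 (isBall_bounded (hinv n).1)
      exact le_antisymm (ge_of_tendsto' hdiam hle) Metric.diam_nonneg
    obtain ⟨x, hx⟩ := eq_singleton_of_diam_zero hB hBd
    have hxB : x ∈ B := by rw [hx]; rfl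
    have hInter : ⋂ n, s n = B := by
      apply Set.Subset.antisymm
      · intro y hy
        simp only [Set.mem_iInter] at hy
        have hdist : ∀ n, dist x y ≤ Metric.diam (s n) := fun n =>
          Metric.dist_le_diam_of_mem (isBall_bounded (hinv n).1) ((hinv n).2 hxB) (hy n)
        have h0 : dist x y ≤ 0 := ge_of_tendsto' hdiam hdist
        have : y = x := (dist_le_zero.mp (dist_comm x y ▸ h0))
        rw [hx, this]; rfl
      · exact Set.subset_iInter fun n => (hinv n).2
    have hanti : Antitone s := antitone_nat_of_succ_le fun n => (hstrict n).1
    have hmeasn : ∀ n, MeasurableSet (s n) := fun n => isBall_measurableSet (hinv n).1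
    have hνt : Tendsto (fun n => (((ν (s n)).toReal : ℂ))) atTop (𝓝 (((ν B).toReal : ℂ))) := by
      have t1 : Tendsto (fun n => ν (s n)) atTop (𝓝 (ν B)) := by
        have := tendsto_measure_iInter_atTop (μ := ν)
          (fun n => (hmeasn n).nullMeasurableSet) hanti ⟨0, measure_ne_top ν _⟩
        rwa [hInter] at this
      have t2 : Tendsto (fun n => (ν (s n)).toReal) atTop (𝓝 ((ν B).toReal)) :=
        (ENNReal.tendsto_toReal (measure_ne_top ν B)).comp t1
      exact (Complex.continuous_ofReal.continuousAt).tendsto.comp t2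
    have hIt : Tendsto (fun n => ∫ x in s n, f x ∂ν) atTop (𝓝 (∫ x in B, f x ∂ν)) := by
      have := tendsto_setIntegral_of_antitone (μ := ν) hmeasn hanti ⟨0, hf.integrableOn⟩
      rwa [hInter] at this
    have h1 : Tendsto (fun n => (((ν D).toReal : ℂ)) * ∫ x in s n, f x ∂ν) atTop
        (𝓝 ((((ν D).toReal : ℂ)) * ∫ x in B, f x ∂ν)) := hIt.const_mul _
    have h2' : Tendsto (fun n => (((ν D).toReal : ℂ)) * ∫ x in s n, f x ∂ν) atTop
        (𝓝 ((((ν B).toReal : ℂ)) * ∫ x in D, f x ∂ν)) := by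
      simp only [hkey]
      exact hνt.mul_const _
    exact tendsto_nhds_unique h1 h2'


lemma setIntegral_ball_zero (hultra : ∀ x y z : X, dist x y ≤ max (dist x z) (dist z y))
    (h1 : {B : Set X | IsBall B ∧ 0 < Metric.diam B}.Countable)
    (hf : Integrable f ν)
    (Hnested : ∀ B D : Set X, IsBall B → IsBall D → B ⊆ D →
      (((ν D).toReal : ℂ)) * ∫ x in B, f x ∂ν = (((ν B).toReal : ℂ)) * ∫ x in D, f x ∂ν)
    (Hint : ∫ x, f x ∂ν = 0) {B : Set X} (hB : IsBall B) : ∫ x in B, f x ∂ν = 0 := by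
  classical
  set 𝒞 := {E : Set X | IsBall E ∧ B ⊆ E ∧ 0 < Metric.diam E} with h𝒞
  have hBne := isBall_nonempty hB
  obtain ⟨z0, hz0⟩ := hBne
  have hcover : ∀ y : X, y ∈ B ∨ ∃ E ∈ 𝒞, y ∈ E := by
    intro y
    by_cases hy : y ∈ B
    · exact Or.inl hy
    · right
      obtain ⟨z, r, hr, hBz⟩ := hB
      have hyE : y ∈ Metric.closedBall z (max r (dist z y)) :=
        Metric.mem_closedBall.mpr (by rw [dist_comm]; exact le_max_right _ _)
      have hBE : B ⊆ Metric.closedBall z (max r (dist z y)) := by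
        rw [hBz]; exact Metric.closedBall_subset_closedBall (le_max_left _ _)
      have hEball : IsBall (Metric.closedBall z (max r (dist z y))) :=
        ⟨z, _, le_max_of_le_left hr, rfl⟩
      have hss : B ⊂ Metric.closedBall z (max r (dist z y)) :=
        ssubset_of_subset_of_ne hBE (fun h => hy (h ▸ hyE))
      exact ⟨_, ⟨hEball, hBE, diam_pos_of_ssubset ⟨z0, hz0⟩ hEball hss⟩, hyE⟩
  rcases Set.eq_empty_or_nonempty 𝒞 with hemp | hne
  · have : B = Set.univ := by
      apply Set.eq_univ_of_forall
      intro y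
      rcases hcover y with h | ⟨E, hE, _⟩
      · exact h
      · rw [hemp] at hE; exact absurd hE (Set.notMem_empty E)
    rw [this, setIntegral_univ]; exact Hint
  · have hsub𝒞 : 𝒞 ⊆ {B : Set X | IsBall B ∧ 0 < Metric.diam B} := fun E hE => ⟨hE.1, hE.2.2⟩
    have hcount : 𝒞.Countable := Set.Countable.mono hsub𝒞 h1
    obtain ⟨e, he⟩ := Set.Countable.exists_eq_range hcount hne
    have hemem : ∀ n, e n ∈ 𝒞 := fun n => he ▸ Set.mem_range_self n
    set E : ℕ → Set X := fun n => Nat.rec (e 0) (fun n En => if e (n+1) ⊆ En then En else e (n+1)) n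
      with hE
    have hE0 : E 0 = e 0 := rfl
    have hEsucc : ∀ n, E (n+1) = if e (n+1) ⊆ E n then E n else e (n+1) := fun n => rfl
    have hEmem : ∀ n, E n ∈ 𝒞 := by
      intro n; induction n with
      | zero => exact hemem 0
      | succ n ih => rw [hEsucc]; split_ifs; exacts [ih, hemem (n+1)]
    have hEstep : ∀ n, E n ⊆ E (n+1) := by
      intro n
      rw [hEsucc]
      split_ifs with h
      · exact subset_rfl
      · rcases isBall_nested hultra (hEmem n).1 (hemem (n+1)).1
          ⟨z0, (hEmem n).2.1 hz0, (hemem (n+1)).2.1 hz0⟩ with h' | h'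
        · exact h'
        · exact absurd h' h
    have hEmono : Monotone E := monotone_nat_of_le_succ hEstep
    have hecov : ∀ n, e n ⊆ E n := by
      intro n
      cases n with
      | zero => exact subset_rfl
      | succ n => rw [hEsucc]; split_ifs with h; exacts [h, subset_rfl]
    have hEuniv : ⋃ n, E n = Set.univ := by
      apply Set.eq_univ_of_forall
      intro y
      rcases hcover y with h | ⟨Ey, hEy, hyE⟩
      · exact Set.mem_iUnion.mpr ⟨0, (hEmem 0).2.1 h⟩
      · obtain ⟨i, rfl⟩ := he ▸ hEy
        exact Set.mem_iUnion.mpr ⟨i, hecov i hyE⟩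
    have hEmeas : ∀ n, MeasurableSet (E n) := fun n => isBall_measurableSet (hEmem n).1
    have hkey : ∀ n, (((ν (E n)).toReal : ℂ)) * ∫ x in B, f x ∂ν
        = (((ν B).toReal : ℂ)) * ∫ x in E n, f x ∂ν :=
      fun n => Hnested B (E n) hB (hEmem n).1 (hEmem n).2.1
    have hνt : Tendsto (fun n => (((ν (E n)).toReal : ℂ))) atTop (𝓝 (((ν Set.univ).toReal : ℂ))) := by
      have t1 : Tendsto (fun n => ν (E n)) atTop (𝓝 (ν Set.univ)) := by
        have := tendsto_measure_iUnion_atTop (μ := ν) hEmono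
        rwa [hEuniv] at this
      exact (Complex.continuous_ofReal.continuousAt).tendsto.comp
        ((ENNReal.tendsto_toReal (measure_ne_top ν _)).comp t1)
    have hIt : Tendsto (fun n => ∫ x in E n, f x ∂ν) atTop (𝓝 (∫ x, f x ∂ν)) := by
      have := tendsto_setIntegral_of_monotone (μ := ν) hEmeas hEmono
        (by rw [hEuniv]; exact hf.integrableOn)
      rwa [hEuniv, setIntegral_univ] at this
    have hlim1 : Tendsto (fun n => (((ν (E n)).toReal : ℂ)) * ∫ x in B, f x ∂ν) atTop
        (𝓝 ((((ν Set.univ).toReal : ℂ)) * ∫ x in B, f x ∂ν)) := hνt.mul_const _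
    have hlim2 : Tendsto (fun n => (((ν (E n)).toReal : ℂ)) * ∫ x in B, f x ∂ν) atTop (𝓝 0) := by
      simp only [hkey]
      have := hIt.const_mul (((ν B).toReal : ℂ))
      rwa [Hint, mul_zero] at this
    have hfin : (((ν Set.univ).toReal : ℂ)) * ∫ x in B, f x ∂ν = 0 :=
      tendsto_nhds_unique hlim1 hlim2
    rcases mul_eq_zero.mp hfin with h | h
    · have hν0 : ν Set.univ = 0 := by
        by_contra hc
        have h2 := ENNReal.toReal_ne_zero.mpr ⟨hc, measure_ne_top ν Set.univ⟩
        exact h2 (by exact_mod_cast h)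
      exact setIntegral_measure_zero f
        (le_antisymm (hν0 ▸ measure_mono (Set.subset_univ B)) zero_le)
    · exact h


lemma ae_zero_of_ball_integrals_zero
    (hultra : ∀ x y z : X, dist x y ≤ max (dist x z) (dist z y))
    (h1 : {B : Set X | IsBall B ∧ 0 < Metric.diam B}.Countable)
    (h2 : ∀ D : ℕ → Set X, (∀ k, IsBall (D k)) → (∀ k, D (k + 1) ⊂ D k) →
      Filter.Tendsto (fun k => Metric.diam (D k)) Filter.atTop (nhds 0))
    (h3 : ∀ B : Set X, IsBall B → 0 < Metric.diam B →
      ∃ F : Finset (Set X), (∀ C ∈ F, IsMaxSubball C B) ∧ B = ⋃ C ∈ F, C)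
    (hf : Integrable f ν)
    (Hball : ∀ B : Set X, IsBall B → ∫ x in B, f x ∂ν = 0)
    (Hint : ∫ x, f x ∂ν = 0) :
    ∀ᵐ x ∂ν, f x = 0 := by
  have hgen : (inferInstance : MeasurableSpace X)
      = MeasurableSpace.generateFrom ({A : Set X | IsBall A} ∪ {∅}) := by
    refine le_antisymm ?_ (MeasurableSpace.generateFrom_le ?_)
    · rw [BorelSpace.measurable_eq (α := X), borel]
      exact MeasurableSpace.generateFrom_le fun U hU =>
        isOpen_measurable_gen hultra h1 h2 h3 hU
    · rintro t (ht | ht)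
      · exact isBall_measurableSet ht
      · rw [Set.mem_singleton_iff.mp ht]; exact MeasurableSet.empty
  have hpi : IsPiSystem ({A : Set X | IsBall A} ∪ {∅}) := by
    rintro s (hs | hs) t (ht | ht) hne
    · rcases isBall_nested hultra hs ht hne with h | h
      · rw [Set.inter_eq_self_of_subset_left h]; exact Or.inl hs
      · rw [Set.inter_eq_self_of_subset_right h]; exact Or.inl ht
    · rw [Set.mem_singleton_iff.mp ht] at hne; simp at hne
    · rw [Set.mem_singleton_iff.mp hs] at hne; simp at hne
    · rw [Set.mem_singleton_iff.mp hs] at hne; simp at hne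
  have hall : ∀ A : Set X, MeasurableSet A → ∫ x in A, f x ∂ν = 0 := by
    intro A hA
    refine MeasurableSpace.induction_on_inter (C := fun A _ => ∫ x in A, f x ∂ν = 0) hgen hpi ?_ ?_ ?_ ?_ A hA
    · simp
    · rintro t (ht | ht)
      · exact Hball t ht
      · rw [Set.mem_singleton_iff.mp ht]; simp
    · intro t htm h0
      have hic := integral_add_compl htm hf
      rw [h0, zero_add] at hic
      rw [hic, Hint]
    · intro g hdisj hmeas h0
      rw [integral_iUnion hmeas hdisj hf.integrableOn]
      simp [h0]
  exact hf.ae_eq_zero_of_forall_setIntegral_eq_zero (fun s hs _ => hall s hs)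


end Meas
end Stmt9

open Stmt9

/-- If the ultrametric space `X` (complete, with the countability,
decreasing-diameter and finite-branching conditions) carries a finite Borel
measure `ν`, then the closed linear span of the constants together with the union
of the spaces `V⁰_B` over all balls `B` of nonzero diameter is all of `L²(X,ν)`. -/
theorem stmt_9 {X : Type*} [MetricSpace X] [CompleteSpace X]
    [MeasurableSpace X] [BorelSpace X]
    (hultra : ∀ x y z : X, dist x y ≤ max (dist x z) (dist z y))
    (h1 : {B : Set X | IsBall B ∧ 0 < Metric.diam B}.Countable)
    (h2 : ∀ D : ℕ → Set X, (∀ k, IsBall (D k)) → (∀ k, D (k + 1) ⊂ D k) →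
      Filter.Tendsto (fun k => Metric.diam (D k)) Filter.atTop (nhds 0))
    (h3 : ∀ B : Set X, IsBall B → 0 < Metric.diam B →
      ∃ F : Finset (Set X), (∀ C ∈ F, IsMaxSubball C B) ∧ B = ⋃ C ∈ F, C)
    (ν : Measure X) [IsFiniteMeasure ν] :
    (Submodule.span ℂ
        (ConstFuns ν ∪ ⋃ B ∈ {B : Set X | IsBall B ∧ 0 < Metric.diam B}, V0 ν B)).topologicalClosure
      = ⊤ := by
  classical
  rw [Submodule.topologicalClosure_eq_top_iff, Submodule.eq_bot_iff]
  intro f hf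
  have horth : ∀ g ∈ (ConstFuns ν ∪ ⋃ B ∈ {B : Set X | IsBall B ∧ 0 < Metric.diam B}, V0 ν B),
      (inner ℂ g f : ℂ) = 0 := fun g hg =>
    (Submodule.mem_orthogonal _ f).mp hf g (Submodule.subset_span hg)
  have hfint : Integrable (⇑f) ν := (Lp.memLp f).integrable one_le_two
  -- the constant function 1
  have hconstLp : (indicatorConstLp 2 MeasurableSet.univ (measure_ne_top ν _) (1:ℂ))
      ∈ ConstFuns ν := by
    refine ⟨1, ?_⟩
    filter_upwards [indicatorConstLp_coeFn (p := 2) (hs := MeasurableSet.univ)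
      (hμs := measure_ne_top ν _) (c := (1:ℂ))] with x hx
    rw [hx]; simp
  have Hint : ∫ x, f x ∂ν = 0 := by
    have h10 := horth _ (Or.inl hconstLp)
    rw [MeasureTheory.L2.inner_indicatorConstLp_eq_setIntegral_inner] at h10
    simpa [RCLike.inner_apply] using h10
  -- the pair relation from orthogonality to V0
  have Hpair : ∀ B, IsBall B → 0 < Metric.diam B → ∀ C C', IsMaxSubball C B →
      IsMaxSubball C' B →
      (((ν C').toReal : ℂ)) * ∫ x in C, f x ∂ν = (((ν C).toReal : ℂ)) * ∫ x in C', f x ∂ν := by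
    intro B hB hBd C C' hC hC'
    by_cases hCC : C = C'
    · rw [hCC]
    · set a : ℂ := ((ν C').toReal : ℂ) with ha
      set b : ℂ := ((ν C).toReal : ℂ) with hb
      set uC : Lp ℂ 2 ν :=
        indicatorConstLp 2 (isBall_measurableSet hC.1) (measure_ne_top ν C) (1:ℂ) with huC
      set uC' : Lp ℂ 2 ν :=
        indicatorConstLp 2 (isBall_measurableSet hC'.1) (measure_ne_top ν C') (1:ℂ) with huC'
      set g : Lp ℂ 2 ν := a • uC - b • uC' with hgdef
      have hint_uC : ∫ x, uC x ∂ν = b := by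
        rw [huC, integral_indicatorConstLp]; simp [hb, Measure.real]
      have hint_uC' : ∫ x, uC' x ∂ν = a := by
        rw [huC', integral_indicatorConstLp]; simp [ha, Measure.real]
      have hgmem : g ∈ V0 ν B := by
        constructor
        · refine ⟨{C, C'}, fun A => if A = C then a else -b, ?_, ?_⟩
          · intro A hA
            rcases Finset.mem_insert.mp hA with rfl | hA
            · exact hC
            · rw [Finset.mem_singleton.mp hA]; exact hC'
          · filter_upwards [Lp.coeFn_sub (a • uC) (b • uC'), Lp.coeFn_smul a uC,
              Lp.coeFn_smul b uC',
              indicatorConstLp_coeFn (p := 2) (hs := isBall_measurableSet hC.1)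
                (hμs := measure_ne_top ν C) (c := (1:ℂ)),
              indicatorConstLp_coeFn (p := 2) (hs := isBall_measurableSet hC'.1)
                (hμs := measure_ne_top ν C') (c := (1:ℂ))] with x hx1 hx2 hx3 hx4 hx5
            rw [hgdef]
            rw [Finset.sum_pair hCC]
            rw [hx1]
            simp only [Pi.sub_apply]
            rw [hx2, hx3]
            simp only [Pi.smul_apply, smul_eq_mul]
            rw [hx4, hx5]
            simp only [if_true, if_neg (Ne.symm hCC)]
            ring
        · have hi1 : Integrable (⇑(a • uC)) ν := (Lp.memLp _).integrable one_le_two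
          have hi2 : Integrable (⇑(b • uC')) ν := (Lp.memLp _).integrable one_le_two
          calc ∫ x, g x ∂ν = ∫ x, ((a • uC) x - (b • uC') x) ∂ν := by
                refine integral_congr_ae ?_
                filter_upwards [Lp.coeFn_sub (a • uC) (b • uC')] with x hx
                rw [hgdef, hx]; rfl
            _ = (∫ x, (a • uC) x ∂ν) - ∫ x, (b • uC') x ∂ν := integral_sub hi1 hi2
            _ = a * b - b * a := by
                rw [integral_congr_ae (Lp.coeFn_smul a uC),
                  integral_congr_ae (Lp.coeFn_smul b uC')]
                simp only [Pi.smul_apply, smul_eq_mul]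
                rw [integral_const_mul, integral_const_mul, hint_uC, hint_uC']
            _ = 0 := by ring
      have hBmem : B ∈ {B : Set X | IsBall B ∧ 0 < Metric.diam B} := ⟨hB, hBd⟩
      have h0 := horth g (Or.inr (Set.mem_biUnion hBmem hgmem))
      rw [hgdef] at h0
      rw [inner_sub_left, inner_smul_left, inner_smul_left] at h0
      rw [MeasureTheory.L2.inner_indicatorConstLp_eq_setIntegral_inner,
        MeasureTheory.L2.inner_indicatorConstLp_eq_setIntegral_inner] at h0
      simp only [RCLike.inner_apply, map_one, one_mul, mul_one] at h0
      rw [ha, hb] at h0 ⊢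
      rw [Complex.conj_ofReal, Complex.conj_ofReal] at h0
      linear_combination h0
  have Hratio := fun B hB hd C hC =>
    ratio_maxSubball hultra h3 hfint Hpair (B := B) (C := C) hB hd hC
  have Hnested := fun B D hB hD hBD =>
    nested_ratio hultra h2 h3 hfint Hratio (B := B) (D := D) hB hD hBD
  have Hball := fun B hB =>
    setIntegral_ball_zero hultra h1 hfint Hnested Hint (B := B) hB
  have hzero := ae_zero_of_ball_integrals_zero hultra h1 h2 h3 hfint Hball Hint
  have hfeq : ⇑f =ᵐ[ν] (0 : X → ℂ) := by
    filter_upwards [hzero] with x hx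
    simpa using hx
  exact Lp.ext (hfeq.trans (Lp.coeFn_zero ℂ 2 ν).symm)
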